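/- Let G be a finite abelian group with minimal exponent M, E ⊆ G with |E| = n > 1, and B ⊆ Ĝ such that the Fourier matrix T(E,B) is invertible. Then there exists 1 ≤ k ≤ M with gcd(k,M) = 1 such that |det T(E,kB)| ≥ 1, and for this k the squared condition number of T(E,kB) is less than 4n^n. -/

import Mathlib

/-- The Fourier matrix of an equal-size pair `(E, B)` in a finite abelian group:
its `(i,j)` entry is `b_j(e_i)`. -/
noncomputable def charMatrix {G : Type*} [AddCommGroup G] {n : ℕ}
    (E : Fin n → G) (B : Fin n → AddChar G ℂ) : Matrix (Fin n) (Fin n) ℂ :=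
  Matrix.of fun i j => B j (E i)

/-- The operator (spectral) norm of a matrix. -/
noncomputable def opNorm {ι : Type*} [Fintype ι] [DecidableEq ι]
    (T : Matrix ι ι ℂ) : ℝ :=
  ‖Matrix.toEuclideanCLM (𝕜 := ℂ) T‖

lemma amgm {n : ℕ} (hn : 0 < n) (f : Fin n → ℝ) (hf : ∀ i, 0 ≤ f i) :
    ∏ i, f i ≤ ((∑ i, f i) / n) ^ n := by
  have hw : ∀ i ∈ (Finset.univ : Finset (Fin n)), (0:ℝ) ≤ (n:ℝ)⁻¹ := fun _ _ => by positivity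
  have hw' : ∑ _i : Fin n, (n:ℝ)⁻¹ = 1 := by
    simp [Finset.sum_const]
    field_simp
  have hg := Real.geom_mean_le_arith_mean_weighted Finset.univ (fun _ => (n:ℝ)⁻¹) f hw hw'
    (fun i _ => hf i)
  have hprod : ∏ i, f i ^ ((n:ℝ)⁻¹) = (∏ i, f i) ^ ((n:ℝ)⁻¹) := by
    rw [← Real.finset_prod_rpow _ _ (fun i _ => hf i)]
  rw [hprod] at hg
  have h2 : ((∏ i, f i) ^ ((n:ℝ)⁻¹)) ^ (n:ℕ) ≤ ((∑ i, (n:ℝ)⁻¹ * f i)) ^ (n:ℕ) :=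
    pow_le_pow_left₀ (Real.rpow_nonneg (Finset.prod_nonneg fun i _ => hf i) _) hg n
  rw [← Real.rpow_natCast ((∏ i, f i) ^ ((n:ℝ)⁻¹)) n, ← Real.rpow_mul
    (Finset.prod_nonneg fun i _ => hf i), inv_mul_cancel₀ (by positivity : (n:ℝ) ≠ 0),
    Real.rpow_one] at h2
  calc ∏ i, f i ≤ (∑ i, (n:ℝ)⁻¹ * f i) ^ (n:ℕ) := h2
    _ = ((∑ i, f i) / n) ^ n := by rw [← Finset.mul_sum]; ring_nf

open Matrix Finset in
theorem cond_lt {n : ℕ} (hn : 1 < n) (T : Matrix (Fin n) (Fin n) ℂ)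
    (habs : ∀ i j, ‖T i j‖ = 1) (hD : 1 ≤ ‖T.det‖) :
    (opNorm T * opNorm T⁻¹) ^ 2 < 4 * (n : ℝ) ^ n := by
  haveI : NeZero n := ⟨by omega⟩
  have hT0 : T.det ≠ 0 := by
    intro h; rw [h] at hD; simp at hD; linarith
  set A := Tᴴ * T with hAdef
  have hA : A.IsHermitian := isHermitian_conjTranspose_mul_self T
  set l := hA.eigenvalues with hl
  set U := (hA.eigenvectorUnitary : Matrix (Fin n) (Fin n) ℂ) with hU
  have hUU : U * star U = 1 := (Matrix.mem_unitaryGroup_iff).mp hA.eigenvectorUnitary.2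
  have hl0 : ∀ i, 0 ≤ l i := Matrix.eigenvalues_conjTranspose_mul_self_nonneg T
  -- quadratic form identity
  have herm_qf : ∀ x : Fin n → ℂ,
      star x ⬝ᵥ (A *ᵥ x) = ∑ i, (l i : ℂ) *
        ((starRingEnd ℂ) ((star U *ᵥ x) i) * (star U *ᵥ x) i) := by
    intro x
    set y := star U *ᵥ x with hy
    have hsy : star x ᵥ* U = star y := by
      rw [hy, star_mulVec, Matrix.star_eq_conjTranspose, conjTranspose_conjTranspose]
    calc star x ⬝ᵥ (A *ᵥ x)
        = star x ⬝ᵥ ((U * (Matrix.diagonal (RCLike.ofReal ∘ l)) * star U) *ᵥ x) := by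
          exact congrArg (fun X => star x ⬝ᵥ (X *ᵥ x)) hA.spectral_theorem
      _ = star y ⬝ᵥ ((Matrix.diagonal (RCLike.ofReal ∘ l)) *ᵥ y) := by
          rw [mul_assoc, ← Matrix.mulVec_mulVec, Matrix.dotProduct_mulVec, hsy,
            ← Matrix.mulVec_mulVec]
      _ = ∑ i, (l i : ℂ) * ((starRingEnd ℂ) (y i) * y i) := by
          simp only [dotProduct, Matrix.mulVec_diagonal, Pi.star_apply,
            Function.comp_apply, RCLike.star_def]
          refine Finset.sum_congr rfl fun i _ => ?_
          have : (RCLike.ofReal (l i) : ℂ) = ((l i : ℝ) : ℂ) := rfl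
          rw [this]; ring
  -- key identity, real form
  have key : ∀ x : Fin n → ℂ, ∑ i, Complex.normSq ((T *ᵥ x) i)
      = ∑ i, l i * Complex.normSq ((star U *ᵥ x) i) := by
    intro x
    have h1 : star x ⬝ᵥ (A *ᵥ x) = ∑ i, (Complex.normSq ((T *ᵥ x) i) : ℂ) := by
      rw [hAdef, ← Matrix.mulVec_mulVec, Matrix.dotProduct_mulVec, ← star_mulVec]
      simp [dotProduct, Complex.normSq_eq_conj_mul_self]
    have h2 := herm_qf x
    rw [h1] at h2
    have : (↑(∑ i, Complex.normSq ((T *ᵥ x) i)) : ℂ)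
        = ↑(∑ i, l i * Complex.normSq ((star U *ᵥ x) i)) := by
      push_cast
      rw [h2]
      exact Finset.sum_congr rfl fun i _ => by rw [Complex.normSq_eq_conj_mul_self]
    exact_mod_cast this
  have key2 : ∀ x : Fin n → ℂ,
      ∑ i, Complex.normSq ((star U *ᵥ x) i) = ∑ i, Complex.normSq (x i) := by
    intro x
    set y := star U *ᵥ x with hy
    have hsy : star x ᵥ* U = star y := by
      rw [hy, star_mulVec, Matrix.star_eq_conjTranspose, conjTranspose_conjTranspose]
    have h1 : star y ⬝ᵥ y = star x ⬝ᵥ x := by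
      calc star y ⬝ᵥ y = (star x ᵥ* U) ⬝ᵥ (star U *ᵥ x) := by rw [hsy]
        _ = star x ⬝ᵥ ((U * star U) *ᵥ x) := by
            rw [← Matrix.dotProduct_mulVec, Matrix.mulVec_mulVec]
        _ = star x ⬝ᵥ x := by rw [hUU, Matrix.one_mulVec]
    have : (↑(∑ i, Complex.normSq (y i)) : ℂ) = ↑(∑ i, Complex.normSq (x i)) := by
      push_cast [Complex.normSq_eq_conj_mul_self]
      simpa [dotProduct] using h1
    exact_mod_cast this
  -- trace : sum of eigenvalues
  have htr : ∑ i, l i = (n : ℝ) ^ 2 := by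
    have h1 : A.trace = ∑ i, (l i : ℂ) := by
      calc A.trace = (U * (Matrix.diagonal (RCLike.ofReal ∘ l)) * star U).trace := by
            exact congrArg Matrix.trace hA.spectral_theorem
        _ = ((star U * U) * (Matrix.diagonal (RCLike.ofReal ∘ l))).trace := by
            rw [Matrix.trace_mul_cycle, mul_assoc]
        _ = ∑ i, (l i : ℂ) := by
            rw [(Matrix.mem_unitaryGroup_iff').mp hA.eigenvectorUnitary.2, one_mul,
              Matrix.trace_diagonal]
            rfl
    have h2 : A.trace = ((n : ℝ) ^ 2 : ℝ) := by
      rw [hAdef, Matrix.trace]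
      have : ∀ j, (Tᴴ * T).diag j = ∑ i, (Complex.normSq (T i j) : ℂ) := by
        intro j
        simp [Matrix.mul_apply, Matrix.diag, Matrix.conjTranspose_apply,
          Complex.normSq_eq_conj_mul_self]
      rw [Finset.sum_congr rfl fun j _ => this j]
      have hns : ∀ i j, Complex.normSq (T i j) = 1 := by
        intro i j
        rw [Complex.normSq_eq_norm_sq, habs, one_pow]
      simp [hns]
      push_cast
      ring
    have : (↑(∑ i, l i) : ℂ) = ↑((n:ℝ)^2) := by push_cast; rw [← h1, h2]; push_cast; ring
    exact_mod_cast this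
  -- product of eigenvalues
  have hpr : 1 ≤ ∏ i, l i := by
    have h1 : A.det = ∏ i, (l i : ℂ) := hA.det_eq_prod_eigenvalues
    have h2 : A.det = (Complex.normSq T.det : ℂ) := by
      rw [hAdef, Matrix.det_mul, Matrix.det_conjTranspose, Complex.normSq_eq_conj_mul_self]
      rfl
    have h3 : (↑(∏ i, l i) : ℂ) = ↑(Complex.normSq T.det) := by push_cast; rw [← h1, h2]
    have h4 : ∏ i, l i = Complex.normSq T.det := by exact_mod_cast h3
    rw [h4, Complex.normSq_eq_norm_sq]
    nlinarith
  have hlpos : ∀ i, 0 < l i := by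
    intro i
    rcases (hl0 i).lt_or_eq with h | h
    · exact h
    · exfalso
      have : ∏ j, l j = 0 := Finset.prod_eq_zero (Finset.mem_univ i) h.symm
      rw [this] at hpr; linarith
  -- max and min eigenvalues
  obtain ⟨jmax, _, hjmax⟩ := Finset.exists_max_image Finset.univ l ⟨0, Finset.mem_univ 0⟩
  obtain ⟨imin, _, himin⟩ := Finset.exists_min_image Finset.univ l ⟨0, Finset.mem_univ 0⟩
  simp only [Finset.mem_univ, forall_true_left] at hjmax himin
  -- norm of an element of EuclideanSpace
  have normsq : ∀ x : EuclideanSpace ℂ (Fin n), ‖x‖ ^ 2 = ∑ i, Complex.normSq (x i) := by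
    intro x
    rw [EuclideanSpace.norm_eq, Real.sq_sqrt (Finset.sum_nonneg fun i _ => sq_nonneg _)]
    exact Finset.sum_congr rfl fun i _ => by
      rw [Complex.sq_norm]
  have happ : ∀ (M : Matrix (Fin n) (Fin n) ℂ) (x : EuclideanSpace ℂ (Fin n)) (i : Fin n),
      ((Matrix.toEuclideanCLM (𝕜 := ℂ) M) x) i = (M *ᵥ (x : Fin n → ℂ)) i := fun M x i => rfl
  -- operator norm bounds
  have hTle : opNorm T ≤ Real.sqrt (l jmax) := by
    apply ContinuousLinearMap.opNorm_le_bound _ (Real.sqrt_nonneg _)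
    intro x
    have h1 : ‖(Matrix.toEuclideanCLM (𝕜 := ℂ) T) x‖ ^ 2 ≤ l jmax * ‖x‖ ^ 2 := by
      rw [normsq, normsq]
      calc ∑ i, Complex.normSq (((Matrix.toEuclideanCLM (𝕜 := ℂ) T) x) i)
          = ∑ i, Complex.normSq ((T *ᵥ (x : Fin n → ℂ)) i) := by
            exact Finset.sum_congr rfl fun i _ => by rw [happ]
        _ = ∑ i, l i * Complex.normSq ((star U *ᵥ (x : Fin n → ℂ)) i) := key _
        _ ≤ ∑ i, l jmax * Complex.normSq ((star U *ᵥ (x : Fin n → ℂ)) i) := by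
            apply Finset.sum_le_sum
            intro i _
            exact mul_le_mul_of_nonneg_right (hjmax i) (Complex.normSq_nonneg _)
        _ = l jmax * ∑ i, Complex.normSq ((x : Fin n → ℂ) i) := by
            rw [← Finset.mul_sum, key2]
        _ = l jmax * ∑ i, Complex.normSq (x i) := rfl
    have h2 : ‖(Matrix.toEuclideanCLM (𝕜 := ℂ) T) x‖
        = Real.sqrt (‖(Matrix.toEuclideanCLM (𝕜 := ℂ) T) x‖ ^ 2) :=
      (Real.sqrt_sq (norm_nonneg _)).symm
    rw [h2]
    calc Real.sqrt (‖(Matrix.toEuclideanCLM (𝕜 := ℂ) T) x‖ ^ 2)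
        ≤ Real.sqrt (l jmax * ‖x‖ ^ 2) := Real.sqrt_le_sqrt h1
      _ = Real.sqrt (l jmax) * ‖x‖ := by
          rw [Real.sqrt_mul (hl0 jmax), Real.sqrt_sq (norm_nonneg _)]
  have hTinvle : opNorm T⁻¹ ≤ Real.sqrt ((l imin)⁻¹) := by
    apply ContinuousLinearMap.opNorm_le_bound _ (Real.sqrt_nonneg _)
    intro x
    set z := (Matrix.toEuclideanCLM (𝕜 := ℂ) T⁻¹) x with hz
    have hTz : T *ᵥ (z : Fin n → ℂ) = (x : Fin n → ℂ) := by
      have h := congrArg (Matrix.toEuclideanCLM (𝕜 := ℂ))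
        (Matrix.mul_nonsing_inv T (isUnit_iff_ne_zero.mpr hT0))
      rw [_root_.map_mul, _root_.map_one] at h
      have h2 : (Matrix.toEuclideanCLM (𝕜 := ℂ) T) ((Matrix.toEuclideanCLM (𝕜 := ℂ) T⁻¹) x)
          = x := by
        calc (Matrix.toEuclideanCLM (𝕜 := ℂ) T) ((Matrix.toEuclideanCLM (𝕜 := ℂ) T⁻¹) x)
            = ((Matrix.toEuclideanCLM (𝕜 := ℂ) T) * (Matrix.toEuclideanCLM (𝕜 := ℂ) T⁻¹)) x :=
              rfl
          _ = (1 : EuclideanSpace ℂ (Fin n) →L[ℂ] EuclideanSpace ℂ (Fin n)) x := by rw [h]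
          _ = x := rfl
      funext i
      rw [← happ]
      exact congrFun (congrArg (fun v : EuclideanSpace ℂ (Fin n) => (v : Fin n → ℂ)) h2) i
    have h1 : l imin * ‖z‖ ^ 2 ≤ ‖x‖ ^ 2 := by
      rw [normsq, normsq]
      calc l imin * ∑ i, Complex.normSq (z i)
          = l imin * ∑ i, Complex.normSq ((star U *ᵥ (z : Fin n → ℂ)) i) := by rw [key2]
        _ = ∑ i, l imin * Complex.normSq ((star U *ᵥ (z : Fin n → ℂ)) i) := Finset.mul_sum _ _ _
        _ ≤ ∑ i, l i * Complex.normSq ((star U *ᵥ (z : Fin n → ℂ)) i) :=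
            Finset.sum_le_sum fun i _ =>
              mul_le_mul_of_nonneg_right (himin i) (Complex.normSq_nonneg _)
        _ = ∑ i, Complex.normSq ((T *ᵥ (z : Fin n → ℂ)) i) := (key _).symm
        _ = ∑ i, Complex.normSq (x i) := by rw [hTz]
    have h2 : ‖z‖ ^ 2 ≤ (l imin)⁻¹ * ‖x‖ ^ 2 := by
      rw [← le_div_iff₀' (hlpos imin)] at h1
      rw [div_eq_inv_mul] at h1
      exact h1
    have h3 : ‖z‖ = Real.sqrt (‖z‖ ^ 2) := (Real.sqrt_sq (norm_nonneg _)).symm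
    rw [h3]
    calc Real.sqrt (‖z‖ ^ 2) ≤ Real.sqrt ((l imin)⁻¹ * ‖x‖ ^ 2) := Real.sqrt_le_sqrt h2
      _ = Real.sqrt ((l imin)⁻¹) * ‖x‖ := by
          rw [Real.sqrt_mul (inv_nonneg.mpr (hl0 imin)), Real.sqrt_sq (norm_nonneg _)]
  -- combine
  have hcond : (opNorm T * opNorm T⁻¹) ^ 2 ≤ l jmax / l imin := by
    have h0 : 0 ≤ opNorm T := norm_nonneg _
    have h0' : 0 ≤ opNorm T⁻¹ := norm_nonneg _
    have := mul_le_mul hTle hTinvle h0' (Real.sqrt_nonneg _)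
    calc (opNorm T * opNorm T⁻¹) ^ 2 ≤ (Real.sqrt (l jmax) * Real.sqrt ((l imin)⁻¹)) ^ 2 :=
          pow_le_pow_left₀ (by positivity) this 2
      _ = l jmax / l imin := by
          rw [mul_pow, Real.sq_sqrt (hl0 jmax), Real.sq_sqrt (inv_nonneg.mpr (hl0 imin))]
          ring
  -- final arithmetic
  have hnn1 : (1:ℝ) ≤ (n:ℝ) ^ n := one_le_pow₀ (by exact_mod_cast hn.le)
  rcases eq_or_ne jmax imin with heq | hne
  · calc (opNorm T * opNorm T⁻¹) ^ 2 ≤ l jmax / l imin := hcond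
      _ = 1 := by rw [heq, div_self (ne_of_gt (hlpos imin))]
      _ < 4 * (n:ℝ) ^ n := by nlinarith
  · -- l jmax / l imin ≤ l jmax * ∏_{i ≠ imin} l i
    have hprodrest : (l imin)⁻¹ ≤ ∏ i ∈ Finset.univ.erase imin, l i := by
      have h1 : l imin * ∏ i ∈ Finset.univ.erase imin, l i = ∏ i, l i :=
        Finset.mul_prod_erase Finset.univ l (Finset.mem_univ imin)
      rw [inv_le_iff_one_le_mul₀ (hlpos imin)]
      calc (1:ℝ) ≤ ∏ i, l i := hpr
        _ = (∏ i ∈ Finset.univ.erase imin, l i) * l imin := by rw [← h1]; ring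
    set s := (Finset.univ.erase imin).erase jmax with hs
    have hjmem : jmax ∈ Finset.univ.erase imin := Finset.mem_erase.mpr ⟨hne, Finset.mem_univ _⟩
    have hprod2 : ∏ i ∈ Finset.univ.erase imin, l i = l jmax * ∏ i ∈ s, l i :=
      (Finset.mul_prod_erase _ l hjmem).symm
    -- μ function
    set μ : Fin n → ℝ := fun i => if i = imin ∨ i = jmax then l jmax / 2 else l i with hμ
    have hμ0 : ∀ i, 0 ≤ μ i := by
      intro i
      rw [hμ]
      dsimp only
      split
      · linarith [hl0 jmax]
      · exact hl0 i
    have hμs : ∀ i ∈ s, μ i = l i := by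
      intro i hi
      rw [hs] at hi
      rw [Finset.mem_erase, Finset.mem_erase] at hi
      rw [hμ]
      dsimp only
      rw [if_neg]
      push_neg
      exact ⟨hi.2.1, hi.1⟩
    have hμimin : μ imin = l jmax / 2 := by rw [hμ]; dsimp only; rw [if_pos (Or.inl rfl)]
    have hμjmax : μ jmax = l jmax / 2 := by rw [hμ]; dsimp only; rw [if_pos (Or.inr rfl)]
    -- sum of μ
    have hsum_l : ∑ i, l i = l imin + (l jmax + ∑ i ∈ s, l i) := by
      rw [← Finset.add_sum_erase _ l (Finset.mem_univ imin), ← Finset.add_sum_erase _ l hjmem]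
    have hsum_μ : ∑ i, μ i = l jmax / 2 + (l jmax / 2 + ∑ i ∈ s, l i) := by
      rw [← Finset.add_sum_erase _ μ (Finset.mem_univ imin), ← Finset.add_sum_erase _ μ hjmem,
        hμimin, hμjmax, Finset.sum_congr rfl hμs]
    have hsum_μ' : ∑ i, μ i = (n:ℝ)^2 - l imin := by
      rw [hsum_μ]
      have := htr
      rw [hsum_l] at this
      linarith
    -- product of μ
    have hprod_μ : ∏ i, μ i = (l jmax / 2) * ((l jmax / 2) * ∏ i ∈ s, l i) := by
      rw [← Finset.mul_prod_erase _ μ (Finset.mem_univ imin), ← Finset.mul_prod_erase _ μ hjmem,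
        hμimin, hμjmax, Finset.prod_congr rfl hμs]
    have hfour : l jmax * ∏ i ∈ Finset.univ.erase imin, l i = 4 * ∏ i, μ i := by
      rw [hprod2, hprod_μ]; ring
    have hamgm : ∏ i, μ i ≤ (((n:ℝ)^2 - l imin) / n) ^ n := by
      have := amgm (by omega) μ hμ0
      rwa [hsum_μ'] at this
    have hnpos : (0:ℝ) < (n:ℝ) := by positivity
    have hstrict : (((n:ℝ)^2 - l imin) / n) ^ n < (n:ℝ) ^ n := by
      have hb : ((n:ℝ)^2 - l imin) / n < (n:ℝ) := by
        rw [div_lt_iff₀ hnpos]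
        have h9 : (n:ℝ) * n = (n:ℝ)^2 := by ring
        linarith [hlpos imin]
      have ha : (0:ℝ) ≤ ((n:ℝ)^2 - l imin) / n := by
        apply div_nonneg _ hnpos.le
        have h8 : l imin ≤ (n:ℝ)^2 := by
          rw [← htr]
          exact Finset.single_le_sum (fun i _ => hl0 i) (Finset.mem_univ imin)
        linarith
      exact pow_lt_pow_left₀ hb ha (by omega)
    calc (opNorm T * opNorm T⁻¹) ^ 2 ≤ l jmax / l imin := hcond
      _ ≤ l jmax * ∏ i ∈ Finset.univ.erase imin, l i := by
          rw [div_eq_mul_inv]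
          exact mul_le_mul_of_nonneg_left hprodrest (hl0 jmax)
      _ = 4 * ∏ i, μ i := hfour
      _ ≤ 4 * (((n:ℝ)^2 - l imin) / n) ^ n := by linarith [hamgm]
      _ < 4 * (n:ℝ) ^ n := by linarith [hstrict]

open Matrix in
theorem exists_good_k {G : Type*} [AddCommGroup G] [Fintype G] {n : ℕ} (hn : 1 < n)
    (E : Fin n → G) (hE : Function.Injective E)
    (B : Fin n → AddChar G ℂ)
    (hdet : (charMatrix E B).det ≠ 0) :
    ∃ k, 1 ≤ k ∧ k ≤ AddMonoid.exponent G ∧ Nat.gcd k (AddMonoid.exponent G) = 1 ∧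
      1 ≤ ‖(charMatrix E (fun j => B j ^ k)).det‖ ∧
      (charMatrix E (fun j => B j ^ k)).det ≠ 0 := by
  classical
  set M := AddMonoid.exponent G with hMdef
  have hM0 : M ≠ 0 := AddMonoid.exponent_ne_zero_of_finite
  haveI : Nontrivial G := by
    refine ⟨E ⟨0, by omega⟩, E ⟨1, by omega⟩, fun h => ?_⟩
    have := hE h
    simp [Fin.ext_iff] at this
  have hM2 : 1 < M := AddMonoid.one_lt_exponent
  haveI : NeZero M := ⟨hM0⟩
  have hpow : ∀ (ψ : AddChar G ℂ) (g : G), ψ g ^ M = 1 := by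
    intro ψ g
    rw [← AddChar.map_nsmul_eq_pow, hMdef, AddMonoid.exponent_nsmul_eq_zero g, AddChar.map_zero_eq_one]
  set p : ℕ := M with hp
  set K := CyclotomicField p ℚ with hK
  haveI : NeZero ((p : ℕ) : ℚ) := ⟨by exact_mod_cast hM0⟩
  haveI : IsCyclotomicExtension {p} ℚ K := CyclotomicField.isCyclotomicExtension p ℚ
  haveI : FiniteDimensional ℚ K := IsCyclotomicExtension.finiteDimensional {p} ℚ K
  set ζK : K := IsCyclotomicExtension.zeta p ℚ K with hζKdef
  have hζK : IsPrimitiveRoot ζK M := IsCyclotomicExtension.zeta_spec p ℚ K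
  set ι : K →ₐ[ℚ] ℂ := IsAlgClosed.lift with hι
  have hζ : IsPrimitiveRoot (ι ζK) M := hζK.map_of_injective ι.injective
  -- exponents
  have hex : ∀ i j, ∃ a, a < M ∧ (ι ζK) ^ a = B j (E i) := fun i j =>
    hζ.eq_pow_of_pow_eq_one (hpow (B j) (E i))
  set a : Fin n → Fin n → ℕ := fun i j => (hex i j).choose with ha
  have haspec : ∀ i j, (ι ζK) ^ (a i j) = B j (E i) := fun i j => (hex i j).choose_spec.2
  set KM : Matrix (Fin n) (Fin n) K := Matrix.of (fun i j => ζK ^ a i j) with hKM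
  have hmapι : KM.map ι = charMatrix E B := by
    funext i j
    simp only [hKM, Matrix.map_apply, Matrix.of_apply, map_pow, charMatrix]
    exact haspec i j
  have detmap : ∀ (σ : K →ₐ[ℚ] ℂ) (Mx : Matrix (Fin n) (Fin n) K),
      (Mx.map ⇑σ).det = σ Mx.det := fun σ Mx => (σ.map_det Mx).symm
  have hdetK0 : KM.det ≠ 0 := by
    intro h
    apply hdet
    rw [← hmapι, detmap, h, map_zero]
  -- integrality
  have hζint : IsIntegral ℤ ζK := hζK.isIntegral (by omega)
  have hint : IsIntegral ℤ KM.det := by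
    set S := integralClosure ℤ K with hS
    set MS : Matrix (Fin n) (Fin n) S := Matrix.of (fun i j => (⟨ζK, hζint⟩ : S) ^ a i j) with hMS
    have h2 : KM = MS.map (algebraMap S K) := by
      funext i j
      show ζK ^ a i j = algebraMap S K ((⟨ζK, hζint⟩ : S) ^ a i j)
      rw [map_pow]
      rfl
    have h3 : KM.det = algebraMap S K MS.det := by
      rw [h2]
      exact ((algebraMap S K).map_det MS).symm
    rw [h3]
    exact (MS.det).2
  -- norm
  set N : ℚ := Algebra.norm ℚ KM.det with hN
  have hNint : IsIntegral ℤ N := Algebra.isIntegral_norm ℚ hint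
  have hN0 : N ≠ 0 := by
    rw [hN]
    exact (Algebra.norm_ne_zero_iff).mpr hdetK0
  obtain ⟨z, hz⟩ := IsIntegrallyClosed.isIntegral_iff.mp hNint
  have hNabs : 1 ≤ |N| := by
    rw [← hz]
    have hz0 : z ≠ 0 := by rintro rfl; simp at hz; exact hN0 hz.symm
    rw [show (algebraMap ℤ ℚ) z = ((z : ℤ) : ℚ) from rfl, ← Int.cast_abs]
    exact_mod_cast Int.one_le_abs hz0
  have hprodemb : (algebraMap ℚ ℂ) N = ∏ σ : K →ₐ[ℚ] ℂ, σ KM.det :=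
    Algebra.norm_eq_prod_embeddings ℚ ℂ KM.det
  have hprodabs : 1 ≤ ∏ σ : K →ₐ[ℚ] ℂ, ‖σ KM.det‖ := by
    rw [← norm_prod Finset.univ (fun σ : K →ₐ[ℚ] ℂ => σ KM.det), ← hprodemb,
      eq_ratCast (algebraMap ℚ ℂ) N,
      show ((N:ℚ):ℂ) = (((N:ℚ):ℝ):ℂ) by push_cast; ring, Complex.norm_real, Real.norm_eq_abs]
    rw [show |(N:ℝ)| = ((|N| : ℚ) : ℝ) by push_cast; ring]
    exact_mod_cast hNabs
  -- pick σ with big abs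
  haveI : Nonempty (K →ₐ[ℚ] ℂ) := ⟨ι⟩
  obtain ⟨σ, _, hσmax⟩ := Finset.exists_max_image Finset.univ
    (fun σ : K →ₐ[ℚ] ℂ => ‖σ KM.det‖) ⟨Classical.arbitrary _, Finset.mem_univ _⟩
  have hσ1 : 1 ≤ ‖σ KM.det‖ := by
    by_contra hlt
    push_neg at hlt
    have hb : ∏ τ : K →ₐ[ℚ] ℂ, ‖τ KM.det‖ ≤
        ‖σ KM.det‖ ^ (Fintype.card (K →ₐ[ℚ] ℂ)) := by
      have := Finset.prod_le_prod (s := (Finset.univ : Finset (K →ₐ[ℚ] ℂ)))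
        (f := fun τ : K →ₐ[ℚ] ℂ => ‖τ KM.det‖)
        (g := fun _ => ‖σ KM.det‖)
        (fun τ _ => norm_nonneg _) (fun τ _ => hσmax τ (Finset.mem_univ τ))
      rwa [Finset.prod_const, Finset.card_univ] at this
    have hcard : 0 < Fintype.card (K →ₐ[ℚ] ℂ) := Fintype.card_pos
    have : ‖σ KM.det‖ ^ (Fintype.card (K →ₐ[ℚ] ℂ)) < 1 :=
      pow_lt_one₀ (norm_nonneg _) hlt (by omega)
    linarith [hprodabs]
  -- primitive root image
  have hσζ : IsPrimitiveRoot (σ ζK) M := hζK.map_of_injective σ.injective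
  obtain ⟨k, hkM, hk⟩ := hζ.eq_pow_of_pow_eq_one hσζ.pow_eq_one
  have hkcop : Nat.Coprime k M := (hζ.pow_iff_coprime (by omega) k).mp (hk ▸ hσζ)
  have hk0 : k ≠ 0 := by
    intro h
    rw [h] at hkcop
    simp [Nat.Coprime] at hkcop
    omega
  refine ⟨k, by omega, by omega, hkcop, ?_, ?_⟩
  · have hmat : charMatrix E (fun j => B j ^ k) = KM.map σ := by
      funext i j
      simp only [charMatrix, Matrix.of_apply, Matrix.map_apply, hKM]
      rw [AddChar.pow_apply, ← haspec i j, map_pow, ← hk]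
      rw [← pow_mul, ← pow_mul, mul_comm]
    rw [hmat, detmap]
    exact hσ1
  · have hmat : charMatrix E (fun j => B j ^ k) = KM.map σ := by
      funext i j
      simp only [charMatrix, Matrix.of_apply, Matrix.map_apply, hKM]
      rw [AddChar.pow_apply, ← haspec i j, map_pow, ← hk]
      rw [← pow_mul, ← pow_mul, mul_comm]
    rw [hmat, detmap]
    intro h
    exact hdetK0 (σ.injective (h.trans (map_zero σ).symm))


lemma abs_eq_one_of_pow {z : ℂ} {m : ℕ} (hm : m ≠ 0) (hzm : z ^ m = 1) :
    ‖z‖ = 1 := by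
  have h := congrArg norm hzm
  rw [norm_pow, norm_one] at h
  by_contra hne
  rcases lt_or_gt_of_ne hne with hlt | hgt
  · have := pow_lt_one₀ (norm_nonneg z) hlt hm
    rw [h] at this; exact lt_irrefl 1 this
  · have := one_lt_pow₀ hgt hm
    rw [h] at this; exact lt_irrefl 1 this

theorem stmt_14 {G : Type*} [AddCommGroup G] [Fintype G] {n : ℕ} (hn : 1 < n)
    (E : Fin n → G) (hE : Function.Injective E)
    (B : Fin n → AddChar G ℂ) (hB : Function.Injective B)
    (hdet : (charMatrix E B).det ≠ 0) :
    ∃ k, 1 ≤ k ∧ k ≤ AddMonoid.exponent G ∧ Nat.gcd k (AddMonoid.exponent G) = 1 ∧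
      1 ≤ ‖(charMatrix E (fun j => B j ^ k)).det‖ ∧
      (opNorm (charMatrix E (fun j => B j ^ k)) *
          opNorm (charMatrix E (fun j => B j ^ k))⁻¹) ^ 2 < 4 * (n : ℝ) ^ n := by
  obtain ⟨k, hk1, hkM, hkgcd, hkabs, _⟩ := exists_good_k hn E hE B hdet
  have hM0 : AddMonoid.exponent G ≠ 0 := AddMonoid.exponent_ne_zero_of_finite
  have habs : ∀ i j, ‖(charMatrix E (fun j => B j ^ k)) i j‖ = 1 := by
    intro i j
    apply abs_eq_one_of_pow hM0
    show ((B j ^ k) (E i)) ^ AddMonoid.exponent G = 1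
    rw [← AddChar.map_nsmul_eq_pow, AddMonoid.exponent_nsmul_eq_zero (E i),
      AddChar.map_zero_eq_one]
  exact ⟨k, hk1, hkM, hkgcd, hkabs, cond_lt hn _ habs hkabs⟩
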